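/- Let G = (V,E) be a simple graph with n ≥ 3 vertices and m edges, let η : E → {1,…,m} be a bijection, let e ∈ E, and let x be a real number with x ≥ 0. Then Q_η(G,e,x) ≥ Σ_{1 ≤ i ≤ n−1, i odd} (|NB_i(G,e)|/i)·(x − m + i)·x^{n−i−1}. -/

import Mathlib

open Finset

variable {V : Type*}

/-- The number of proper colorings of `G` using the colors `{1, …, k}`. -/
noncomputable def propCol (G : SimpleGraph V) (k : ℕ) : ℕ :=
  Set.ncard {f : V → ℕ | (∀ v, f v ∈ Finset.Icc 1 k) ∧ ∀ ⦃a b : V⦄, G.Adj a b → f a ≠ f b}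

/-- The number of `L`-colorings of `G`, for an assignment `L` of color lists. -/
noncomputable def listCol (G : SimpleGraph V) (L : V → Finset ℕ) : ℕ :=
  Set.ncard {f : V → ℕ | (∀ v, f v ∈ L v) ∧ ∀ ⦃a b : V⦄, G.Adj a b → f a ≠ f b}

/-- `α(uv) = |L(u) \ L(v)|`, symmetrized (when `|L(u)| = |L(v)|` one has
`|L(u) \ L(v)| = |L(v) \ L(u)|`, so this is exactly `|L(u) \ L(v)|`). -/
noncomputable def alphaL (L : V → Finset ℕ) : Sym2 V → ℕ :=
  Sym2.lift ⟨fun a b => ((L a) \ (L b)).card ⊔ ((L b) \ (L a)).card,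
    fun a b => by simp [sup_comm]⟩

/-- `B` is the edge set of a broken cycle of `G` with respect to the edge ordering `η`:
the edge set of a path `v₁v₂⋯v_r` of `G` with `r ≥ 3` such that `v₁v_r ∈ E(G)` and
`η(v₁v_r) < η(v_iv_{i+1})` for each `i`. -/
def IsBrokenCycle [DecidableEq V] (G : SimpleGraph V) (η : Sym2 V → ℕ)
    (B : Finset (Sym2 V)) : Prop :=
  ∃ (u w : V) (p : G.Walk u w), p.IsPath ∧ 2 ≤ p.length ∧ G.Adj u w ∧
    (∀ f ∈ p.edges, η s(u, w) < η f) ∧ B = p.edges.toFinset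

/-- `NB_i(G)`: the collection of `i`-element subsets of `E(G)` containing no broken cycle. -/
def NBset [DecidableEq V] (G : SimpleGraph V) (η : Sym2 V → ℕ) (i : ℕ) :
    Set (Finset (Sym2 V)) :=
  {A : Finset (Sym2 V) | ↑A ⊆ G.edgeSet ∧ A.card = i ∧
    ∀ B : Finset (Sym2 V), IsBrokenCycle G η B → ¬ B ⊆ A}

/-- `|NB_i(G)|`. -/
noncomputable def NBcard [DecidableEq V] (G : SimpleGraph V) (η : Sym2 V → ℕ) (i : ℕ) : ℕ :=
  Set.ncard (NBset G η i)

/-- `|NB_i(G, e)|`: the number of `i`-element subsets of `E(G)` that contain `e`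
and contain no broken cycle. -/
noncomputable def NBe [DecidableEq V] (G : SimpleGraph V) (η : Sym2 V → ℕ)
    (i : ℕ) (e : Sym2 V) : ℕ :=
  Set.ncard {A : Finset (Sym2 V) | A ∈ NBset G η i ∧ e ∈ A}

/-- `Q_η(G, e, x)`, where `n` is the number of vertices of `G`. -/
noncomputable def Qeta [DecidableEq V] [Fintype V] (G : SimpleGraph V)
    (η : Sym2 V → ℕ) (e : Sym2 V) (x : ℝ) : ℝ :=
  (∑ i ∈ (Finset.Icc 1 (Fintype.card V - 1)).filter (fun i => Odd i),
      (NBe G η i e : ℝ) / i * x ^ (Fintype.card V - i)) -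
  ∑ i ∈ (Finset.Icc 2 (Fintype.card V - 1)).filter (fun i => Even i),
      (NBe G η i e : ℝ) * x ^ (Fintype.card V - i)

/-- The contraction `G/e` of the edge `e = uv`: the vertex `v` is merged into `u`
(so `v` becomes an isolated vertex), loops are removed and parallel edges are merged. -/
def contractE (G : SimpleGraph V) (u v : V) : SimpleGraph V :=
  SimpleGraph.fromRel (fun a b =>
    (G.Adj a b ∧ a ≠ v ∧ b ≠ v) ∨ (a = u ∧ b ≠ v ∧ G.Adj v b))

/-- The number of triangles (3-cliques) of `H`. -/
noncomputable def triangleCount (H : SimpleGraph V) : ℕ :=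
  Set.ncard {s : Finset V | H.IsNClique 3 s}

/-- `|NB₂(H)| = C(|E(H)|, 2) − △(H)`: the number of 2-element subsets of `E(H)`
containing no broken cycle (this count is independent of the edge ordering). -/
noncomputable def NB2 (H : SimpleGraph V) : ℕ :=
  Nat.choose (H.edgeSet.ncard) 2 - triangleCount H

/-- `C` is the edge set of a 4-cycle of `G`. -/
def IsFourCycle [DecidableEq V] (G : SimpleGraph V) (C : Finset (Sym2 V)) : Prop :=
  ∃ (u : V) (p : G.Walk u u), p.IsCycle ∧ p.length = 4 ∧ C = p.edges.toFinset

/-- The number of 4-cycles of `G` containing the edge `e`. -/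
noncomputable def fourCyclesOn [DecidableEq V] (G : SimpleGraph V) (e : Sym2 V) : ℕ :=
  Set.ncard {C : Finset (Sym2 V) | IsFourCycle G C ∧ e ∈ C}

/-- `c₄(G)`: the maximum over edges `e` of the number of 4-cycles of `G` containing `e`,
i.e. the least `r` such that every edge lies in at most `r` 4-cycles. -/
noncomputable def c4 [DecidableEq V] (G : SimpleGraph V) : ℕ :=
  sSup {r : ℕ | ∃ e ∈ G.edgeSet, r = fourCyclesOn G e}

/-- `β(T)` for the connected component `c` of `H`: the number of colors lying in every
list `L w` for `w` a vertex of the component `c`. -/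
noncomputable def betaComp (L : V → Finset ℕ) (H : SimpleGraph V)
    (c : H.ConnectedComponent) : ℕ :=
  Set.ncard {x : ℕ | ∀ w : V, H.connectedComponentMk w = c → x ∈ L w}

/-- `∏_j β(T_j)` over the connected components `T_j` of the spanning subgraph `H`. -/
noncomputable def betaProd (L : V → Finset ℕ) (H : SimpleGraph V) : ℕ :=
  ∏ᶠ c : H.ConnectedComponent, betaComp L H c

lemma NBe_zero [Fintype V] [DecidableEq V] (G : SimpleGraph V) [DecidableRel G.Adj] (η : Sym2 V → ℕ)
    (e : Sym2 V) {m i : ℕ} (hm : m = G.edgeFinset.card) (h : m < i) :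
    NBe G η i e = 0 := by
  rw [NBe, Set.ncard_eq_zero (Set.toFinite _)]
  ext A
  simp only [Set.mem_setOf_eq, Set.mem_empty_iff_false, iff_false, not_and]
  rintro ⟨hsub, hcard, -⟩ _
  have : A ⊆ G.edgeFinset := fun f hf => SimpleGraph.mem_edgeFinset.2 (hsub hf)
  have := Finset.card_le_card this
  omega

lemma key [Fintype V] [DecidableEq V] (G : SimpleGraph V) [DecidableRel G.Adj] (η : Sym2 V → ℕ)
    (e : Sym2 V) {m j : ℕ} (hm : m = G.edgeFinset.card) (hj : 1 ≤ j) (hjm : j ≤ m) :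
    j * NBe G η (j + 1) e ≤ (m - j) * NBe G η j e := by
  classical
  have hfin1 : {A : Finset (Sym2 V) | A ∈ NBset G η (j+1) ∧ e ∈ A}.Finite := Set.toFinite _
  have hfin2 : {A : Finset (Sym2 V) | A ∈ NBset G η j ∧ e ∈ A}.Finite := Set.toFinite _
  set S1 : Finset (Finset (Sym2 V)) := hfin1.toFinset with hS1
  set S2 : Finset (Finset (Sym2 V)) := hfin2.toFinset with hS2
  have hN1 : NBe G η (j+1) e = S1.card := Set.ncard_eq_toFinset_card _ hfin1
  have hN2 : NBe G η j e = S2.card := Set.ncard_eq_toFinset_card _ hfin2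
  rw [hN1, hN2]
  have hmem1 : ∀ A ∈ S1, (↑A ⊆ G.edgeSet ∧ A.card = j + 1 ∧
      (∀ B : Finset (Sym2 V), IsBrokenCycle G η B → ¬ B ⊆ A)) ∧ e ∈ A := by
    intro A hA
    have := hfin1.mem_toFinset.1 hA
    exact this
  have hmem2 : ∀ A : Finset (Sym2 V), ((↑A ⊆ G.edgeSet ∧ A.card = j ∧
      (∀ B : Finset (Sym2 V), IsBrokenCycle G η B → ¬ B ⊆ A)) ∧ e ∈ A) → A ∈ S2 := by
    intro A hA
    exact hfin2.mem_toFinset.2 hA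
  -- pair counts
  have hc1 : (S1.sigma (fun A => A.erase e)).card = j * S1.card := by
    rw [Finset.card_sigma]
    have h : ∀ A ∈ S1, (A.erase e).card = j := by
      intro A hA
      obtain ⟨⟨-, hcard, -⟩, heA⟩ := hmem1 A hA
      rw [Finset.card_erase_of_mem heA, hcard]; omega
    rw [Finset.sum_congr rfl h, Finset.sum_const, smul_eq_mul, mul_comm]
  have hc2 : (S2.sigma (fun A => G.edgeFinset \ A)).card = (m - j) * S2.card := by
    rw [Finset.card_sigma]
    have h : ∀ A ∈ S2, (G.edgeFinset \ A).card = m - j := by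
      intro A hA
      obtain ⟨⟨hsub, hcard, -⟩, -⟩ := hfin2.mem_toFinset.1 hA
      have hss : A ⊆ G.edgeFinset := fun f hf => SimpleGraph.mem_edgeFinset.2 (hsub hf)
      rw [Finset.card_sdiff_of_subset hss, hcard, hm]
    rw [Finset.sum_congr rfl h, Finset.sum_const, smul_eq_mul, mul_comm]
  rw [← hc1, ← hc2]
  apply Finset.card_le_card_of_injOn (fun p => ⟨p.1.erase p.2, p.2⟩)
  · rintro ⟨A, f⟩ hp
    simp only [Finset.mem_coe, Finset.mem_sigma] at hp ⊢
    obtain ⟨hAS, hfA⟩ := hp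
    obtain ⟨⟨hsub, hcard, hnb⟩, heA⟩ := hmem1 A hAS
    have hfne : f ≠ e := Finset.ne_of_mem_erase hfA
    have hfA' : f ∈ A := Finset.mem_of_mem_erase hfA
    constructor
    · apply hmem2
      refine ⟨⟨?_, ?_, ?_⟩, ?_⟩
      · exact fun g hg => hsub (Finset.mem_of_mem_erase (by exact_mod_cast hg))
      · rw [Finset.card_erase_of_mem hfA', hcard]; omega
      · exact fun B hB hBsub => hnb B hB (hBsub.trans (Finset.erase_subset _ _))
      · exact Finset.mem_erase.2 ⟨(Ne.symm hfne), heA⟩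
    · exact Finset.mem_sdiff.2 ⟨SimpleGraph.mem_edgeFinset.2 (hsub hfA'),
        Finset.notMem_erase _ _⟩
  · rintro ⟨A, f⟩ hp ⟨A', f'⟩ hp' heq
    simp only [Finset.mem_coe, Finset.mem_sigma] at hp hp'
    simp only [Sigma.mk.inj_iff, heq_eq_eq] at heq
    obtain ⟨h1, h2⟩ := heq
    subst h2
    have hfA : f ∈ A := Finset.mem_of_mem_erase hp.2
    have hfA' : f ∈ A' := Finset.mem_of_mem_erase hp'.2
    have hAA : A = A' := by
      rw [← Finset.insert_erase hfA, ← Finset.insert_erase hfA', h1]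
    simp [hAA]

theorem stmt6 [Fintype V] [DecidableEq V] (G : SimpleGraph V) [DecidableRel G.Adj]
    (n m : ℕ) (hn : n = Fintype.card V) (hm : m = G.edgeFinset.card) (hn3 : 3 ≤ n)
    (η : Sym2 V → ℕ) (hη : Set.BijOn η G.edgeSet (Set.Icc 1 m))
    (e : Sym2 V) (he : e ∈ G.edgeSet) (x : ℝ) (hx : 0 ≤ x) :
    Qeta G η e x ≥
      ∑ i ∈ (Finset.Icc 1 (n - 1)).filter (fun i => Odd i),
        (NBe G η i e : ℝ) / i * (x - m + i) * x ^ (n - i - 1) := by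
  classical
  set N : ℕ → ℝ := fun i => (NBe G η i e : ℝ) with hN
  set g : ℕ → ℝ := fun j => N j / j * ((m : ℝ) - j) * x ^ (n - j - 1) with hg
  set O : Finset ℕ := (Finset.Icc 1 (n - 1)).filter (fun i => Odd i) with hO
  set Ev : Finset ℕ := (Finset.Icc 2 (n - 1)).filter (fun i => Even i) with hEv
  set O' : Finset ℕ := (Finset.Icc 1 (n - 2)).filter (fun i => Odd i) with hO'
  have hQ : Qeta G η e x =
      (∑ i ∈ O, N i / i * x ^ (n - i)) - ∑ i ∈ Ev, N i * x ^ (n - i) := by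
    rw [Qeta, ← hn]
  -- split the odd sum
  have hsplit : ∀ i ∈ O, N i / i * x ^ (n - i) =
      N i / i * (x - m + i) * x ^ (n - i - 1) + g i := by
    intro i hi
    simp only [hO, Finset.mem_filter, Finset.mem_Icc] at hi
    generalize hk : n - i - 1 = k
    have h1 : n - i = k + 1 := by omega
    rw [h1, pow_succ]
    simp only [hg, hk]
    ring
  have hA : (∑ i ∈ O, N i / i * x ^ (n - i)) =
      (∑ i ∈ O, N i / i * (x - m + i) * x ^ (n - i - 1)) + ∑ i ∈ O, g i := by
    rw [← Finset.sum_add_distrib]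
    exact Finset.sum_congr rfl hsplit
  -- reindex the even sum
  have hEq : (∑ i ∈ Ev, N i * x ^ (n - i)) = ∑ j ∈ O', N (j + 1) * x ^ (n - j - 1) := by
    apply Finset.sum_nbij' (i := fun i => i - 1) (j := fun j => j + 1)
    · intro i hi
      simp only [hEv, Finset.mem_filter, Finset.mem_Icc, Nat.even_iff] at hi
      simp only [hO', Finset.mem_filter, Finset.mem_Icc, Nat.odd_iff]
      omega
    · intro j hj
      simp only [hO', Finset.mem_filter, Finset.mem_Icc, Nat.odd_iff] at hj
      simp only [hEv, Finset.mem_filter, Finset.mem_Icc, Nat.even_iff]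
      omega
    · intro i hi
      simp only [hEv, Finset.mem_filter, Finset.mem_Icc] at hi
      omega
    · intro j hj
      omega
    · intro i hi
      simp only [hEv, Finset.mem_filter, Finset.mem_Icc] at hi
      have h1 : i - 1 + 1 = i := by omega
      have h2 : n - (i - 1) - 1 = n - i := by omega
      rw [h1, h2]
  -- termwise bound
  have hterm : ∀ j ∈ O', N (j + 1) * x ^ (n - j - 1) ≤ g j := by
    intro j hj
    simp only [hO', Finset.mem_filter, Finset.mem_Icc] at hj
    have hj1 : 1 ≤ j := hj.1.1
    by_cases hjm : j ≤ m
    · have hkey := key G η e hm hj1 hjm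
      have hj0 : (0 : ℝ) < j := by exact_mod_cast hj1
      have hcast : (j : ℝ) * N (j + 1) ≤ ((m : ℝ) - j) * N j := by
        have h := (Nat.cast_le (α := ℝ)).2 hkey
        push_cast [Nat.cast_sub hjm] at h
        simpa [hN] using h
      have hle : N (j + 1) ≤ N j / j * ((m : ℝ) - j) := by
        rw [div_mul_eq_mul_div, le_div_iff₀ hj0]
        calc N (j + 1) * (j : ℝ) = (j : ℝ) * N (j + 1) := by ring
          _ ≤ ((m : ℝ) - j) * N j := hcast
          _ = N j * ((m : ℝ) - j) := by ring
      exact mul_le_mul_of_nonneg_right hle (pow_nonneg hx _)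
    · have h1 : NBe G η (j + 1) e = 0 := NBe_zero G η e hm (by omega)
      have h2 : NBe G η j e = 0 := NBe_zero G η e hm (by omega)
      simp [hg, hN, h1, h2]
  -- nonnegativity of g on O
  have hgnn : ∀ j ∈ O, 0 ≤ g j := by
    intro j hj
    simp only [hO, Finset.mem_filter, Finset.mem_Icc] at hj
    by_cases hjm : j ≤ m
    · have : (0:ℝ) ≤ (m : ℝ) - j := by
        have : (j:ℝ) ≤ m := by exact_mod_cast hjm
        linarith
      have hNnn : (0:ℝ) ≤ N j := by simp [hN]
      have : (0:ℝ) ≤ N j / j := div_nonneg hNnn (by positivity)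
      simp only [hg]
      positivity
    · have h2 : NBe G η j e = 0 := NBe_zero G η e hm (by omega)
      simp [hg, hN, h2]
  have hsub : O' ⊆ O := by
    intro j hj
    simp only [hO', Finset.mem_filter, Finset.mem_Icc] at hj
    simp only [hO, Finset.mem_filter, Finset.mem_Icc]
    exact ⟨⟨hj.1.1, by omega⟩, hj.2⟩
  have hB : (∑ i ∈ Ev, N i * x ^ (n - i)) ≤ ∑ j ∈ O, g j := by
    rw [hEq]
    calc (∑ j ∈ O', N (j + 1) * x ^ (n - j - 1)) ≤ ∑ j ∈ O', g j :=
          Finset.sum_le_sum hterm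
      _ ≤ ∑ j ∈ O, g j :=
          Finset.sum_le_sum_of_subset_of_nonneg hsub (fun j hj _ => hgnn j hj)
  rw [ge_iff_le, hQ, hA]
  linarith
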